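/- Suppose 0 < P(R = 1 | X, D) < 1 almost surely, let π_R(X, D) := P(R = 1 | X, D) / P(R = 0 | X, D) and m_C(η, X, D) := P(V_C < η | X, D, R = 1) be the true nuisance functions, and let m̂ : ℝ × ℝ^k × {0,1} → [0,1] be measurable and π̂ : ℝ^k × {0,1} → ℝ be measurable and bounded below by a positive constant, with the relevant random variables square-integrable. Then: sup over η ∈ ℝ of | E[ψ_C(η; m̂, π̂)] − E[ψ_C(η; m_C, π_R)] | ≤ ‖ 1/π̂(X, D) − 1/π_R(X, D) ‖_{L²(P)} · sup over η ∈ ℝ of ‖ m_C(η, X, D) − m̂(η, X, D) ‖_{L²(P)}. -/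

import Mathlib

open MeasureTheory ProbabilityTheory
open scoped ENNReal

lemma cs_aux {Ω : Type*} [MeasurableSpace Ω] {μ : Measure Ω} {F G : Ω → ℝ}
    (hF : MemLp F 2 μ) (hG : MemLp G 2 μ) :
    |∫ ω, F ω * G ω ∂μ| ≤ (eLpNorm F 2 μ).toReal * (eLpNorm G 2 μ).toReal := by
  have h1 : ∫ ω, F ω * G ω ∂μ = @inner ℝ _ _ (hF.toLp F) (hG.toLp G) := by
    rw [MeasureTheory.L2.inner_def]
    refine integral_congr_ae ?_
    filter_upwards [hF.coeFn_toLp, hG.coeFn_toLp] with ω h1 h2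
    simp [h1, h2, RCLike.inner_apply, mul_comm]
  rw [h1, ← Lp.norm_toLp F hF, ← Lp.norm_toLp G hG]
  exact abs_real_inner_le_norm _ _

lemma pullout_aux {Ω : Type*} [m0 : MeasurableSpace Ω] {μ : Measure Ω} [IsFiniteMeasure μ]
    {m : MeasurableSpace Ω} (hm : m ≤ m0) {h f : Ω → ℝ}
    (hh : StronglyMeasurable[m] h) (hhf : Integrable (h * f) μ) (hf : Integrable f μ) :
    ∫ ω, h ω * f ω ∂μ = ∫ ω, h ω * (μ[f|m]) ω ∂μ := by
  haveI : IsFiniteMeasure (μ.trim hm) := isFiniteMeasure_trim hm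
  calc ∫ ω, h ω * f ω ∂μ = ∫ ω, (h * f) ω ∂μ := rfl
    _ = ∫ ω, (μ[h * f|m]) ω ∂μ := (integral_condExp hm).symm
    _ = ∫ ω, (h * μ[f|m]) ω ∂μ :=
        integral_congr_ae (condExp_mul_of_stronglyMeasurable_left hh hhf hf)
    _ = ∫ ω, h ω * (μ[f|m]) ω ∂μ := rfl

lemma key_lemma {Ω : Type*} [mΩ : MeasurableSpace Ω] {P : Measure Ω} [IsFiniteMeasure P]
    {β : Type*} [mβ : MeasurableSpace β] {φ : Ω → β} (hφ : Measurable φ)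
    {R : Ω → ℝ} (hRbin : ∀ ω, R ω = 0 ∨ R ω = 1)
    (hR1 : MeasurableSet {ω' | R ω' = 1}) {e : Ω → ℝ}
    (heR : e =ᵐ[P]
      P[Set.indicator {ω' | R ω' = 1} (fun _ => (1:ℝ)) | MeasurableSpace.comap φ mβ])
    {h : Ω → ℝ} (hmG : Measurable[MeasurableSpace.comap φ mβ] h) (hint : Integrable h P) :
    ∫ ω, R ω * h ω ∂P = ∫ ω, e ω * h ω ∂P := by
  have hRind : ∀ ω, R ω = Set.indicator {ω' | R ω' = 1} (fun _ => (1:ℝ)) ω := fun ω => by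
    rcases hRbin ω with h | h <;> simp [Set.indicator_apply, Set.mem_setOf_eq, h]
  have hfint : Integrable (Set.indicator {ω' | R ω' = 1} (fun _ => (1:ℝ))) P :=
    (integrable_const (1:ℝ)).indicator hR1
  have hprod : Integrable (h * Set.indicator {ω' | R ω' = 1} (fun _ => (1:ℝ))) P := by
    refine hint.mono (hint.1.mul hfint.1) (Filter.Eventually.of_forall fun ω => ?_)
    have hb : ‖Set.indicator {ω' | R ω' = 1} (fun _ => (1:ℝ)) ω‖ ≤ 1 := by
      by_cases hω : ω ∈ {ω' | R ω' = 1} <;> simp [Set.indicator_apply, hω]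
    calc ‖(h * Set.indicator {ω' | R ω' = 1} (fun _ => (1:ℝ))) ω‖
        = ‖h ω‖ * ‖Set.indicator {ω' | R ω' = 1} (fun _ => (1:ℝ)) ω‖ := norm_mul _ _
      _ ≤ ‖h ω‖ := mul_le_of_le_one_right (norm_nonneg _) hb
  calc ∫ ω, R ω * h ω ∂P
      = ∫ ω, h ω * Set.indicator {ω' | R ω' = 1} (fun _ => (1:ℝ)) ω ∂P := by
        refine integral_congr_ae (Filter.Eventually.of_forall fun ω => ?_)
        show R ω * h ω = h ω * Set.indicator {ω' | R ω' = 1} (fun _ => (1:ℝ)) ω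
        rw [← hRind ω, mul_comm]
    _ = ∫ ω, h ω *
          (P[Set.indicator {ω' | R ω' = 1} (fun _ => (1:ℝ))|MeasurableSpace.comap φ mβ]) ω ∂P :=
        pullout_aux hφ.comap_le hmG.stronglyMeasurable hprod hfint
    _ = ∫ ω, e ω * h ω ∂P := by
        refine integral_congr_ae (heR.mono fun ω hω => ?_)
        show h ω * _ = e ω * h ω
        rw [← hω, mul_comm]

lemma keyV_lemma {Ω : Type*} [mΩ : MeasurableSpace Ω] {P : Measure Ω} [IsProbabilityMeasure P]
    {β : Type*} [mβ : MeasurableSpace β] {φ : Ω → β} (hφ : Measurable φ)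
    {R : Ω → ℝ} (hRbin : ∀ ω, R ω = 0 ∨ R ω = 1)
    (hR1 : MeasurableSet {ω' | R ω' = 1}) (hpos : P {ω' | R ω' = 1} ≠ 0)
    {s : Set Ω} (hs : MeasurableSet s) {mCf : Ω → ℝ}
    (hmC : mCf =ᵐ[P[|{ω' | R ω' = 1}]]
      (P[|{ω' | R ω' = 1}])[Set.indicator s (fun _ => (1:ℝ)) | MeasurableSpace.comap φ mβ])
    {h : Ω → ℝ} (hmG : Measurable[MeasurableSpace.comap φ mβ] h) (hint : Integrable h P) :
    ∫ ω, R ω * h ω * Set.indicator s (fun _ => (1:ℝ)) ω ∂P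
      = ∫ ω, R ω * h ω * mCf ω ∂P := by
  have hPstop : P {ω' | R ω' = 1} ≠ ⊤ := measure_ne_top _ _
  haveI : IsProbabilityMeasure (P[|{ω' | R ω' = 1}]) := cond_isProbabilityMeasure hpos
  have hQint : ∀ (u : Ω → ℝ), Integrable u P → Integrable u (P[|{ω' | R ω' = 1}]) := by
    intro u hu
    rw [ProbabilityTheory.cond]
    exact (hu.restrict).smul_measure (ENNReal.inv_ne_top.mpr hpos)
  have hconv : ∀ (u : Ω → ℝ), ∫ ω, u ω ∂(P[|{ω' | R ω' = 1}])
      = (P {ω' | R ω' = 1}).toReal⁻¹ * ∫ ω, R ω * u ω ∂P := by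
    intro u
    rw [ProbabilityTheory.cond, integral_smul_measure, ENNReal.toReal_inv, smul_eq_mul]
    congr 1
    rw [← integral_indicator hR1]
    refine integral_congr_ae (Filter.Eventually.of_forall fun ω => ?_)
    show Set.indicator {ω' | R ω' = 1} (fun ω => u ω) ω = R ω * u ω
    rcases hRbin ω with h0 | h1
    · simp [Set.indicator_apply, Set.mem_setOf_eq, h0]
    · simp [Set.indicator_apply, Set.mem_setOf_eq, h1]
  have hfVint : Integrable (Set.indicator s (fun _ => (1:ℝ))) P :=
    (integrable_const (1:ℝ)).indicator hs
  have hprod : Integrable (h * Set.indicator s (fun _ => (1:ℝ))) P := by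
    refine hint.mono (hint.1.mul hfVint.1) (Filter.Eventually.of_forall fun ω => ?_)
    have hb : ‖Set.indicator s (fun _ => (1:ℝ)) ω‖ ≤ 1 := by
      by_cases hω : ω ∈ s <;> simp [Set.indicator_apply, hω]
    calc ‖(h * Set.indicator s (fun _ => (1:ℝ))) ω‖
        = ‖h ω‖ * ‖Set.indicator s (fun _ => (1:ℝ)) ω‖ := norm_mul _ _
      _ ≤ ‖h ω‖ := mul_le_of_le_one_right (norm_nonneg _) hb
  have core : ∫ ω, h ω * Set.indicator s (fun _ => (1:ℝ)) ω ∂(P[|{ω' | R ω' = 1}])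
      = ∫ ω, h ω * mCf ω ∂(P[|{ω' | R ω' = 1}]) := by
    calc ∫ ω, h ω * Set.indicator s (fun _ => (1:ℝ)) ω ∂(P[|{ω' | R ω' = 1}])
        = ∫ ω, h ω * ((P[|{ω' | R ω' = 1}])[Set.indicator s (fun _ => (1:ℝ))
            | MeasurableSpace.comap φ mβ]) ω ∂(P[|{ω' | R ω' = 1}]) :=
          pullout_aux hφ.comap_le hmG.stronglyMeasurable (hQint _ hprod) (hQint _ hfVint)
      _ = ∫ ω, h ω * mCf ω ∂(P[|{ω' | R ω' = 1}]) := by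
          refine integral_congr_ae (hmC.mono fun ω hω => ?_)
          show h ω * _ = h ω * mCf ω
          rw [← hω]
  rw [hconv, hconv] at core
  have htoR : ((P {ω' | R ω' = 1}).toReal)⁻¹ ≠ 0 :=
    inv_ne_zero (ENNReal.toReal_ne_zero.mpr ⟨hpos, hPstop⟩)
  have core2 := mul_left_cancel₀ htoR core
  calc ∫ ω, R ω * h ω * Set.indicator s (fun _ => (1:ℝ)) ω ∂P
      = ∫ ω, R ω * (h ω * Set.indicator s (fun _ => (1:ℝ)) ω) ∂P := by
        refine integral_congr_ae (Filter.Eventually.of_forall fun ω => ?_)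
        show _ = R ω * (h ω * _)
        ring
    _ = ∫ ω, R ω * (h ω * mCf ω) ∂P := core2
    _ = ∫ ω, R ω * h ω * mCf ω ∂P := by
        refine integral_congr_ae (Filter.Eventually.of_forall fun ω => ?_)
        show R ω * (h ω * mCf ω) = _
        ring

/-- Cauchy–Schwarz bound on the second-order remainder:
`sup_η |E[ψ_C(η; m̂, π̂)] − E[ψ_C(η; m_C, π_R)]|
  ≤ ‖1/π̂(X,D) − 1/π_R(X,D)‖_{L²(P)} · sup_η ‖m_C(η,X,D) − m̂(η,X,D)‖_{L²(P)}`. -/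
theorem stmt_13
    {Ω : Type*} [mΩ : MeasurableSpace Ω] [StandardBorelSpace Ω]
    (P : Measure Ω) [IsProbabilityMeasure P]
    {k : ℕ} (X : Ω → (Fin k → ℝ)) (Y1 Y0 D R : Ω → ℝ)
    (hX : Measurable X) (hY1 : Measurable Y1) (hY0 : Measurable Y0)
    (hD : Measurable D) (hR : Measurable R)
    (hDbin : ∀ ω, D ω = 0 ∨ D ω = 1) (hRbin : ∀ ω, R ω = 0 ∨ R ω = 1)
    -- nonconformity score V_C = v(X, D, Y(1), Y(0))
    (v : (Fin k → ℝ) × ℝ × ℝ × ℝ → ℝ) (hv : Measurable v)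
    (V : Ω → ℝ) (hV : V = fun ω => v (X ω, D ω, Y1 ω, Y0 ω))
    (γ : ℝ) (hγ : γ ∈ Set.Ioo (0 : ℝ) 1)
    (hpos : 0 < P {ω | R ω = 1})
    -- eR is (a version of) the response propensity P(R = 1 | X, D),
    -- with 0 < P(R = 1 | X, D) < 1 almost surely
    (eR : (Fin k → ℝ) → ℝ → ℝ) (heRmeas : Measurable fun p : (Fin k → ℝ) × ℝ => eR p.1 p.2)
    (heR : (fun ω => eR (X ω) (D ω)) =ᵐ[P]
      MeasureTheory.condExp (MeasurableSpace.comap (fun ω' => (X ω', D ω')) inferInstance) P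
        (Set.indicator {ω' | R ω' = 1} (fun _ => (1 : ℝ))))
    (heRbdd : ∀ᵐ ω ∂P, 0 < eR (X ω) (D ω) ∧ eR (X ω) (D ω) < 1)
    -- mC is (a version of) the true conditional CDF of V_C given (X, D) on the responders
    (mC : ℝ → (Fin k → ℝ) → ℝ → ℝ)
    (hmCmeas : Measurable fun p : ℝ × (Fin k → ℝ) × ℝ => mC p.1 p.2.1 p.2.2)
    (hmCbdd : ∀ η x d, mC η x d ∈ Set.Icc (0 : ℝ) 1)
    (hmC : ∀ η : ℝ, (fun ω => mC η (X ω) (D ω)) =ᵐ[P[|{ω' | R ω' = 1}]]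
      MeasureTheory.condExp (MeasurableSpace.comap (fun ω' => (X ω', D ω')) inferInstance)
        (P[|{ω' | R ω' = 1}])
        (Set.indicator {ω' | V ω' < η} (fun _ => (1 : ℝ))))
    -- m̂ is measurable with values in [0,1]
    (mhat : ℝ → (Fin k → ℝ) → ℝ → ℝ)
    (hmhatmeas : Measurable fun p : ℝ × (Fin k → ℝ) × ℝ => mhat p.1 p.2.1 p.2.2)
    (hmhatbdd : ∀ η x d, mhat η x d ∈ Set.Icc (0 : ℝ) 1)
    -- π̂ is measurable and bounded below by a positive constant
    (πhat : (Fin k → ℝ) → ℝ → ℝ)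
    (hπhatmeas : Measurable fun p : (Fin k → ℝ) × ℝ => πhat p.1 p.2)
    (hπhatpos : ∃ c : ℝ, 0 < c ∧ ∀ x d, c ≤ πhat x d)
    -- square-integrability of the relevant random variables
    (hL2a : MemLp (fun ω => 1 / πhat (X ω) (D ω) -
        1 / (eR (X ω) (D ω) / (1 - eR (X ω) (D ω)))) 2 P)
    (hL2b : ∀ η : ℝ, MemLp (fun ω => mC η (X ω) (D ω) - mhat η (X ω) (D ω)) 2 P) :
    (⨆ η : ℝ,
      |(∫ ω, ((1 - R ω) * (mhat η (X ω) (D ω) - (1 - γ)) +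
          (R ω / πhat (X ω) (D ω)) *
            ((if V ω < η then (1 : ℝ) else 0) - mhat η (X ω) (D ω))) ∂P) -
        (∫ ω, ((1 - R ω) * (mC η (X ω) (D ω) - (1 - γ)) +
          (R ω / (eR (X ω) (D ω) / (1 - eR (X ω) (D ω)))) *
            ((if V ω < η then (1 : ℝ) else 0) - mC η (X ω) (D ω))) ∂P)|) ≤
      (eLpNorm (fun ω => 1 / πhat (X ω) (D ω) -
          1 / (eR (X ω) (D ω) / (1 - eR (X ω) (D ω)))) 2 P).toReal *
        ⨆ η : ℝ, (eLpNorm (fun ω => mC η (X ω) (D ω) - mhat η (X ω) (D ω)) 2 P).toReal := by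
  obtain ⟨c, hc, hcle⟩ := hπhatpos
  have hφ : Measurable fun ω' : Ω => (X ω', D ω') := hX.prodMk hD
  have hφG : Measurable[MeasurableSpace.comap (fun ω' : Ω => (X ω', D ω')) inferInstance]
      fun ω' : Ω => (X ω', D ω') := Measurable.of_comap_le le_rfl
  have hVmeas : Measurable V := by
    rw [hV]; exact hv.comp (hX.prodMk (hD.prodMk (hY1.prodMk hY0)))
  have hR1 : MeasurableSet {ω' | R ω' = 1} := hR (measurableSet_singleton 1)
  have hRabs : ∀ ω, ‖R ω‖ ≤ 1 := fun ω => by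
    rcases hRbin ω with h | h <;> simp [h]
  have intbdd : ∀ (u : Ω → ℝ) (Cu : ℝ), AEStronglyMeasurable u P →
      (∀ᵐ ω ∂P, ‖u ω‖ ≤ Cu) → Integrable u P :=
    fun u Cu hu hb => (memLp_top_of_bound hu Cu hb).integrable le_top
  have hmono : ∀ (w u : Ω → ℝ), Integrable w P → AEStronglyMeasurable u P →
      (∀ ω, ‖u ω‖ ≤ 1) → Integrable (fun ω => R ω * w ω * u ω) P := by
    intro w u hw hu hub
    refine hw.mono ((hR.aestronglyMeasurable.mul hw.1).mul hu)
      (Filter.Eventually.of_forall fun ω => ?_)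
    calc ‖R ω * w ω * u ω‖ = ‖R ω‖ * ‖w ω‖ * ‖u ω‖ := by rw [norm_mul, norm_mul]
      _ ≤ 1 * ‖w ω‖ * 1 := by
          gcongr <;> first | exact norm_nonneg _ | exact hRabs ω | exact hub ω
      _ = ‖w ω‖ := by ring
  -- bounds from hypotheses
  have hπ0 : ∀ ω, πhat (X ω) (D ω) ≠ 0 := fun ω => ne_of_gt (lt_of_lt_of_le hc (hcle _ _))
  have hhinvb : ∀ ω, ‖1 / πhat (X ω) (D ω)‖ ≤ 1 / c := fun ω => by
    have h1 : (0:ℝ) < πhat (X ω) (D ω) := lt_of_lt_of_le hc (hcle _ _)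
    rw [Real.norm_eq_abs, abs_of_nonneg (by positivity)]
    exact one_div_le_one_div_of_le hc (hcle _ _)
  have hhinvmeas : Measurable fun ω => 1 / πhat (X ω) (D ω) :=
    measurable_const.div (hπhatmeas.comp hφ)
  have hhinvG : Measurable[MeasurableSpace.comap (fun ω' : Ω => (X ω', D ω')) inferInstance]
      fun ω => 1 / πhat (X ω) (D ω) := measurable_const.div (hπhatmeas.comp hφG)
  have hhinvint : Integrable (fun ω => 1 / πhat (X ω) (D ω)) P :=
    intbdd _ (1/c) hhinvmeas.aestronglyMeasurable (Filter.Eventually.of_forall hhinvb)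
  have hπRG : Measurable[MeasurableSpace.comap (fun ω' : Ω => (X ω', D ω')) inferInstance]
      fun ω => 1 / (eR (X ω) (D ω) / (1 - eR (X ω) (D ω))) :=
    measurable_const.div ((heRmeas.comp hφG).div (measurable_const.sub (heRmeas.comp hφG)))
  have hf'int : Integrable (fun ω => 1 / πhat (X ω) (D ω) -
      1 / (eR (X ω) (D ω) / (1 - eR (X ω) (D ω)))) P := hL2a.integrable one_le_two
  have hπRint : Integrable (fun ω => 1 / (eR (X ω) (D ω) / (1 - eR (X ω) (D ω)))) P := by
    have := hhinvint.sub hf'int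
    refine this.congr (Filter.Eventually.of_forall fun ω => ?_)
    simp only [Pi.sub_apply]; ring
  have hemeas : Measurable fun ω => eR (X ω) (D ω) := heRmeas.comp hφ
  -- the sup over the L² norms is bounded above
  have hgb : ∀ η ω, ‖mC η (X ω) (D ω) - mhat η (X ω) (D ω)‖ ≤ 1 := fun η ω => by
    have h1 := hmCbdd η (X ω) (D ω); have h2 := hmhatbdd η (X ω) (D ω)
    rw [Real.norm_eq_abs, abs_le]
    constructor
    · linarith [h1.1, h2.2]
    · linarith [h1.2, h2.1]
  have hBdd : BddAbove (Set.range fun η : ℝ =>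
      (eLpNorm (fun ω => mC η (X ω) (D ω) - mhat η (X ω) (D ω)) 2 P).toReal) := by
    refine ⟨1, ?_⟩
    rintro x ⟨η, rfl⟩
    have h1 : eLpNorm (fun ω => mC η (X ω) (D ω) - mhat η (X ω) (D ω)) 2 P ≤ 1 := by
      simpa using eLpNorm_le_of_ae_bound (μ := P) (p := 2) (C := 1)
        (Filter.Eventually.of_forall (hgb η))
    calc (eLpNorm (fun ω => mC η (X ω) (D ω) - mhat η (X ω) (D ω)) 2 P).toReal
        ≤ (1 : ℝ≥0∞).toReal := ENNReal.toReal_mono ENNReal.one_ne_top h1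
      _ = 1 := by simp
  refine ciSup_le fun η => ?_
  -- per-η measurability and bounds
  have hsV : MeasurableSet {ω' | V ω' < η} := hVmeas measurableSet_Iio
  have hindmeas : Measurable fun ω => (if V ω < η then (1:ℝ) else 0) :=
    Measurable.ite hsV measurable_const measurable_const
  have hindb : ∀ ω, ‖(if V ω < η then (1:ℝ) else 0)‖ ≤ 1 := fun ω => by split <;> simp
  have hindeq : ∀ ω, Set.indicator {ω' | V ω' < η} (fun _ => (1:ℝ)) ω
      = if V ω < η then (1:ℝ) else 0 := fun ω => by
    by_cases hw : V ω < η <;> simp [Set.indicator_apply, Set.mem_setOf_eq, hw]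
  have hmCcomp : Measurable fun ω => mC η (X ω) (D ω) :=
    hmCmeas.comp (measurable_const.prodMk hφ)
  have hmCG : Measurable[MeasurableSpace.comap (fun ω' : Ω => (X ω', D ω')) inferInstance]
      fun ω => mC η (X ω) (D ω) := hmCmeas.comp (measurable_const.prodMk hφG)
  have hmhatcomp : Measurable fun ω => mhat η (X ω) (D ω) :=
    hmhatmeas.comp (measurable_const.prodMk hφ)
  have hmhatG : Measurable[MeasurableSpace.comap (fun ω' : Ω => (X ω', D ω')) inferInstance]
      fun ω => mhat η (X ω) (D ω) := hmhatmeas.comp (measurable_const.prodMk hφG)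
  have hmCb : ∀ ω, ‖mC η (X ω) (D ω)‖ ≤ 1 := fun ω => by
    have h1 := hmCbdd η (X ω) (D ω)
    rw [Real.norm_eq_abs, abs_le]; exact ⟨by linarith [h1.1], h1.2⟩
  have hmhatb : ∀ ω, ‖mhat η (X ω) (D ω)‖ ≤ 1 := fun ω => by
    have h1 := hmhatbdd η (X ω) (D ω)
    rw [Real.norm_eq_abs, abs_le]; exact ⟨by linarith [h1.1], h1.2⟩
  -- integrabilities
  have hw2meas : Measurable fun ω => mhat η (X ω) (D ω) - mC η (X ω) (D ω) :=
    hmhatcomp.sub hmCcomp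
  have hw2G : Measurable[MeasurableSpace.comap (fun ω' : Ω => (X ω', D ω')) inferInstance]
      fun ω => mhat η (X ω) (D ω) - mC η (X ω) (D ω) := hmhatG.sub hmCG
  have hw2int : Integrable (fun ω => mhat η (X ω) (D ω) - mC η (X ω) (D ω)) P := by
    refine intbdd _ 2 hw2meas.aestronglyMeasurable (Filter.Eventually.of_forall fun ω => ?_)
    calc ‖mhat η (X ω) (D ω) - mC η (X ω) (D ω)‖
        ≤ ‖mhat η (X ω) (D ω)‖ + ‖mC η (X ω) (D ω)‖ := norm_sub_le _ _
      _ ≤ 2 := by linarith [hmhatb ω, hmCb ω]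
  have hw1meas : Measurable fun ω =>
      (1 / πhat (X ω) (D ω)) * (mC η (X ω) (D ω) - mhat η (X ω) (D ω)) :=
    hhinvmeas.mul (hmCcomp.sub hmhatcomp)
  have hw1G : Measurable[MeasurableSpace.comap (fun ω' : Ω => (X ω', D ω')) inferInstance]
      fun ω => (1 / πhat (X ω) (D ω)) * (mC η (X ω) (D ω) - mhat η (X ω) (D ω)) :=
    hhinvG.mul (hmCG.sub hmhatG)
  have hw1int : Integrable (fun ω =>
      (1 / πhat (X ω) (D ω)) * (mC η (X ω) (D ω) - mhat η (X ω) (D ω))) P := by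
    refine intbdd _ (1/c * 2) (hw1meas.aestronglyMeasurable)
      (Filter.Eventually.of_forall fun ω => ?_)
    calc ‖(1 / πhat (X ω) (D ω)) * (mC η (X ω) (D ω) - mhat η (X ω) (D ω))‖
        = ‖1 / πhat (X ω) (D ω)‖ * ‖mC η (X ω) (D ω) - mhat η (X ω) (D ω)‖ := norm_mul _ _
      _ ≤ 1/c * 2 := by
          have h2 : ‖mC η (X ω) (D ω) - mhat η (X ω) (D ω)‖ ≤ 2 := by
            calc ‖mC η (X ω) (D ω) - mhat η (X ω) (D ω)‖
                ≤ ‖mC η (X ω) (D ω)‖ + ‖mhat η (X ω) (D ω)‖ := norm_sub_le _ _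
              _ ≤ 2 := by linarith [hmhatb ω, hmCb ω]
          have h3 := hhinvb ω
          have h4 : (0:ℝ) ≤ 1/c := by positivity
          nlinarith [norm_nonneg (1 / πhat (X ω) (D ω)),
            norm_nonneg (mC η (X ω) (D ω) - mhat η (X ω) (D ω))]
  have ht1 : Integrable (fun ω => (1 - R ω) * (mhat η (X ω) (D ω) - (1 - γ))) P := by
    refine intbdd _ (2 * (1 + |1 - γ|))
      (((measurable_const.sub hR).mul (hmhatcomp.sub measurable_const)).aestronglyMeasurable)
      (Filter.Eventually.of_forall fun ω => ?_)
    have hb1 : ‖1 - R ω‖ ≤ 2 := by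
      rcases hRbin ω with h | h <;> simp [h] <;> norm_num
    have hb2 : ‖mhat η (X ω) (D ω) - (1 - γ)‖ ≤ 1 + |1 - γ| := by
      calc ‖mhat η (X ω) (D ω) - (1 - γ)‖ ≤ ‖mhat η (X ω) (D ω)‖ + ‖(1 - γ)‖ := norm_sub_le _ _
        _ ≤ 1 + |1 - γ| := by
            rw [Real.norm_eq_abs (1 - γ)]; exact add_le_add (hmhatb ω) le_rfl
    calc ‖(1 - R ω) * (mhat η (X ω) (D ω) - (1 - γ))‖
        = ‖1 - R ω‖ * ‖mhat η (X ω) (D ω) - (1 - γ)‖ := norm_mul _ _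
      _ ≤ 2 * (1 + |1 - γ|) := by
          nlinarith [norm_nonneg (1 - R ω), norm_nonneg (mhat η (X ω) (D ω) - (1 - γ)),
            abs_nonneg (1 - γ)]
  have hs1 : Integrable (fun ω => (1 - R ω) * (mC η (X ω) (D ω) - (1 - γ))) P := by
    refine intbdd _ (2 * (1 + |1 - γ|))
      (((measurable_const.sub hR).mul (hmCcomp.sub measurable_const)).aestronglyMeasurable)
      (Filter.Eventually.of_forall fun ω => ?_)
    have hb1 : ‖1 - R ω‖ ≤ 2 := by
      rcases hRbin ω with h | h <;> simp [h] <;> norm_num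
    have hb2 : ‖mC η (X ω) (D ω) - (1 - γ)‖ ≤ 1 + |1 - γ| := by
      calc ‖mC η (X ω) (D ω) - (1 - γ)‖ ≤ ‖mC η (X ω) (D ω)‖ + ‖(1 - γ)‖ := norm_sub_le _ _
        _ ≤ 1 + |1 - γ| := by
            rw [Real.norm_eq_abs (1 - γ)]; exact add_le_add (hmCb ω) le_rfl
    calc ‖(1 - R ω) * (mC η (X ω) (D ω) - (1 - γ))‖
        = ‖1 - R ω‖ * ‖mC η (X ω) (D ω) - (1 - γ)‖ := norm_mul _ _
      _ ≤ 2 * (1 + |1 - γ|) := by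
          nlinarith [norm_nonneg (1 - R ω), norm_nonneg (mC η (X ω) (D ω) - (1 - γ)),
            abs_nonneg (1 - γ)]
  have ht2 : Integrable (fun ω => R ω * (1 / πhat (X ω) (D ω)) *
      (if V ω < η then (1:ℝ) else 0)) P :=
    hmono _ _ hhinvint hindmeas.aestronglyMeasurable hindb
  have ht3 : Integrable (fun ω => R ω * (1 / πhat (X ω) (D ω)) * mhat η (X ω) (D ω)) P :=
    hmono _ _ hhinvint hmhatcomp.aestronglyMeasurable hmhatb
  have htm : Integrable (fun ω => R ω * (1 / πhat (X ω) (D ω)) * mC η (X ω) (D ω)) P :=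
    hmono _ _ hhinvint hmCcomp.aestronglyMeasurable hmCb
  have hs2 : Integrable (fun ω => R ω * (1 / (eR (X ω) (D ω) / (1 - eR (X ω) (D ω)))) *
      (if V ω < η then (1:ℝ) else 0)) P :=
    hmono _ _ hπRint hindmeas.aestronglyMeasurable hindb
  have hs3 : Integrable (fun ω => R ω * (1 / (eR (X ω) (D ω) / (1 - eR (X ω) (D ω)))) *
      mC η (X ω) (D ω)) P :=
    hmono _ _ hπRint hmCcomp.aestronglyMeasurable hmCb
  have hRw2int : Integrable (fun ω => R ω * (mhat η (X ω) (D ω) - mC η (X ω) (D ω))) P := by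
    refine intbdd _ 2 ((hR.mul hw2meas).aestronglyMeasurable)
      (Filter.Eventually.of_forall fun ω => ?_)
    calc ‖R ω * (mhat η (X ω) (D ω) - mC η (X ω) (D ω))‖
        = ‖R ω‖ * ‖mhat η (X ω) (D ω) - mC η (X ω) (D ω)‖ := norm_mul _ _
      _ ≤ 2 := by
          have h2 : ‖mhat η (X ω) (D ω) - mC η (X ω) (D ω)‖ ≤ 2 := by
            calc ‖mhat η (X ω) (D ω) - mC η (X ω) (D ω)‖
                ≤ ‖mhat η (X ω) (D ω)‖ + ‖mC η (X ω) (D ω)‖ := norm_sub_le _ _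
              _ ≤ 2 := by linarith [hmhatb ω, hmCb ω]
          nlinarith [norm_nonneg (R ω), hRabs ω,
            norm_nonneg (mhat η (X ω) (D ω) - mC η (X ω) (D ω))]
  have hRw1int : Integrable (fun ω => R ω *
      ((1 / πhat (X ω) (D ω)) * (mC η (X ω) (D ω) - mhat η (X ω) (D ω)))) P := by
    have := hmono _ _ hhinvint (hmCcomp.sub hmhatcomp).aestronglyMeasurable
      (fun ω => by
        calc ‖mC η (X ω) (D ω) - mhat η (X ω) (D ω)‖ ≤ 1 := hgb η ω)
    refine this.congr (Filter.Eventually.of_forall fun ω => ?_)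
    simp only [Pi.sub_apply]; ring
  have heb : ∀ᵐ ω ∂P, ‖eR (X ω) (D ω)‖ ≤ 1 := heRbdd.mono fun ω hω => by
    rw [Real.norm_eq_abs, abs_of_pos hω.1]; linarith [hω.2]
  have hew2int : Integrable (fun ω =>
      eR (X ω) (D ω) * (mhat η (X ω) (D ω) - mC η (X ω) (D ω))) P := by
    refine intbdd _ 2 ((hemeas.mul hw2meas).aestronglyMeasurable) (heb.mono fun ω hω => ?_)
    calc ‖eR (X ω) (D ω) * (mhat η (X ω) (D ω) - mC η (X ω) (D ω))‖
        = ‖eR (X ω) (D ω)‖ * ‖mhat η (X ω) (D ω) - mC η (X ω) (D ω)‖ := norm_mul _ _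
      _ ≤ 2 := by
          have h2 : ‖mhat η (X ω) (D ω) - mC η (X ω) (D ω)‖ ≤ 2 := by
            calc ‖mhat η (X ω) (D ω) - mC η (X ω) (D ω)‖
                ≤ ‖mhat η (X ω) (D ω)‖ + ‖mC η (X ω) (D ω)‖ := norm_sub_le _ _
              _ ≤ 2 := by linarith [hmhatb ω, hmCb ω]
          nlinarith [norm_nonneg (eR (X ω) (D ω)),
            norm_nonneg (mhat η (X ω) (D ω) - mC η (X ω) (D ω))]
  have hew1int : Integrable (fun ω => eR (X ω) (D ω) *
      ((1 / πhat (X ω) (D ω)) * (mC η (X ω) (D ω) - mhat η (X ω) (D ω)))) P := by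
    refine intbdd _ (1/c * 2) ((hemeas.mul hw1meas).aestronglyMeasurable)
      (heb.mono fun ω hω => ?_)
    calc ‖eR (X ω) (D ω) * ((1 / πhat (X ω) (D ω)) *
          (mC η (X ω) (D ω) - mhat η (X ω) (D ω)))‖
        = ‖eR (X ω) (D ω)‖ * ‖(1 / πhat (X ω) (D ω)) *
            (mC η (X ω) (D ω) - mhat η (X ω) (D ω))‖ := norm_mul _ _
      _ ≤ 1/c * 2 := by
          have h2 : ‖(1 / πhat (X ω) (D ω)) *
              (mC η (X ω) (D ω) - mhat η (X ω) (D ω))‖ ≤ 1/c * 2 := by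
            calc ‖(1 / πhat (X ω) (D ω)) * (mC η (X ω) (D ω) - mhat η (X ω) (D ω))‖
                = ‖1 / πhat (X ω) (D ω)‖ * ‖mC η (X ω) (D ω) - mhat η (X ω) (D ω)‖ :=
                  norm_mul _ _
              _ ≤ 1/c * 2 := by
                  have h3 : ‖mC η (X ω) (D ω) - mhat η (X ω) (D ω)‖ ≤ 2 := by
                    calc ‖mC η (X ω) (D ω) - mhat η (X ω) (D ω)‖
                        ≤ ‖mC η (X ω) (D ω)‖ + ‖mhat η (X ω) (D ω)‖ := norm_sub_le _ _
                      _ ≤ 2 := by linarith [hmhatb ω, hmCb ω]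
                  have h4 : (0:ℝ) ≤ 1/c := by positivity
                  nlinarith [norm_nonneg (1 / πhat (X ω) (D ω)), hhinvb ω,
                    norm_nonneg (mC η (X ω) (D ω) - mhat η (X ω) (D ω))]
          nlinarith [norm_nonneg (eR (X ω) (D ω)), norm_nonneg ((1 / πhat (X ω) (D ω)) *
            (mC η (X ω) (D ω) - mhat η (X ω) (D ω))), h2,
            (by positivity : (0:ℝ) ≤ 1/c * 2)]
  -- key identities
  have kV1 : ∫ ω, R ω * (1 / πhat (X ω) (D ω)) * (if V ω < η then (1:ℝ) else 0) ∂P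
      = ∫ ω, R ω * (1 / πhat (X ω) (D ω)) * mC η (X ω) (D ω) ∂P := by
    have h1 : ∫ ω, R ω * (1 / πhat (X ω) (D ω)) * (if V ω < η then (1:ℝ) else 0) ∂P
        = ∫ ω, R ω * (1 / πhat (X ω) (D ω)) *
            Set.indicator {ω' | V ω' < η} (fun _ => (1:ℝ)) ω ∂P :=
      integral_congr_ae (Filter.Eventually.of_forall fun ω => by simp only [hindeq])
    rw [h1]
    exact keyV_lemma hφ hRbin hR1 hpos.ne' hsV (hmC η) hhinvG hhinvint
  have kV2 : ∫ ω, R ω * (1 / (eR (X ω) (D ω) / (1 - eR (X ω) (D ω)))) *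
        (if V ω < η then (1:ℝ) else 0) ∂P
      = ∫ ω, R ω * (1 / (eR (X ω) (D ω) / (1 - eR (X ω) (D ω)))) * mC η (X ω) (D ω) ∂P := by
    have h1 : ∫ ω, R ω * (1 / (eR (X ω) (D ω) / (1 - eR (X ω) (D ω)))) *
          (if V ω < η then (1:ℝ) else 0) ∂P
        = ∫ ω, R ω * (1 / (eR (X ω) (D ω) / (1 - eR (X ω) (D ω)))) *
            Set.indicator {ω' | V ω' < η} (fun _ => (1:ℝ)) ω ∂P :=
      integral_congr_ae (Filter.Eventually.of_forall fun ω => by simp only [hindeq])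
    rw [h1]
    exact keyV_lemma hφ hRbin hR1 hpos.ne' hsV (hmC η) hπRG hπRint
  have k1 : ∫ ω, R ω * (mhat η (X ω) (D ω) - mC η (X ω) (D ω)) ∂P
      = ∫ ω, eR (X ω) (D ω) * (mhat η (X ω) (D ω) - mC η (X ω) (D ω)) ∂P :=
    key_lemma hφ hRbin hR1 heR hw2G hw2int
  have k2 : ∫ ω, R ω * ((1 / πhat (X ω) (D ω)) *
        (mC η (X ω) (D ω) - mhat η (X ω) (D ω))) ∂P
      = ∫ ω, eR (X ω) (D ω) * ((1 / πhat (X ω) (D ω)) *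
          (mC η (X ω) (D ω) - mhat η (X ω) (D ω))) ∂P :=
    key_lemma hφ hRbin hR1 heR hw1G hw1int
  -- splitting the two integrals
  have hA : (∫ ω, ((1 - R ω) * (mhat η (X ω) (D ω) - (1 - γ)) +
        (R ω / πhat (X ω) (D ω)) *
          ((if V ω < η then (1:ℝ) else 0) - mhat η (X ω) (D ω))) ∂P)
      = (∫ ω, (1 - R ω) * (mhat η (X ω) (D ω) - (1 - γ)) ∂P)
        + ((∫ ω, R ω * (1 / πhat (X ω) (D ω)) * (if V ω < η then (1:ℝ) else 0) ∂P)
          - ∫ ω, R ω * (1 / πhat (X ω) (D ω)) * mhat η (X ω) (D ω) ∂P) := by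
    have h23 : Integrable (fun ω => R ω * (1 / πhat (X ω) (D ω)) *
        (if V ω < η then (1:ℝ) else 0)
        - R ω * (1 / πhat (X ω) (D ω)) * mhat η (X ω) (D ω)) P := ht2.sub ht3
    calc (∫ ω, ((1 - R ω) * (mhat η (X ω) (D ω) - (1 - γ)) +
          (R ω / πhat (X ω) (D ω)) *
            ((if V ω < η then (1:ℝ) else 0) - mhat η (X ω) (D ω))) ∂P)
        = ∫ ω, ((1 - R ω) * (mhat η (X ω) (D ω) - (1 - γ)) +
            (R ω * (1 / πhat (X ω) (D ω)) * (if V ω < η then (1:ℝ) else 0)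
              - R ω * (1 / πhat (X ω) (D ω)) * mhat η (X ω) (D ω))) ∂P := by
          refine integral_congr_ae (Filter.Eventually.of_forall fun ω => ?_)
          beta_reduce; ring
      _ = (∫ ω, (1 - R ω) * (mhat η (X ω) (D ω) - (1 - γ)) ∂P)
          + ∫ ω, (R ω * (1 / πhat (X ω) (D ω)) * (if V ω < η then (1:ℝ) else 0)
              - R ω * (1 / πhat (X ω) (D ω)) * mhat η (X ω) (D ω)) ∂P :=
          integral_add ht1 h23
      _ = (∫ ω, (1 - R ω) * (mhat η (X ω) (D ω) - (1 - γ)) ∂P)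
          + ((∫ ω, R ω * (1 / πhat (X ω) (D ω)) * (if V ω < η then (1:ℝ) else 0) ∂P)
            - ∫ ω, R ω * (1 / πhat (X ω) (D ω)) * mhat η (X ω) (D ω) ∂P) := by
          rw [integral_sub ht2 ht3]
  have hB : (∫ ω, ((1 - R ω) * (mC η (X ω) (D ω) - (1 - γ)) +
        (R ω / (eR (X ω) (D ω) / (1 - eR (X ω) (D ω)))) *
          ((if V ω < η then (1:ℝ) else 0) - mC η (X ω) (D ω))) ∂P)
      = ∫ ω, (1 - R ω) * (mC η (X ω) (D ω) - (1 - γ)) ∂P := by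
    have hB0 : (∫ ω, ((1 - R ω) * (mC η (X ω) (D ω) - (1 - γ)) +
          (R ω / (eR (X ω) (D ω) / (1 - eR (X ω) (D ω)))) *
            ((if V ω < η then (1:ℝ) else 0) - mC η (X ω) (D ω))) ∂P)
        = (∫ ω, (1 - R ω) * (mC η (X ω) (D ω) - (1 - γ)) ∂P)
          + ((∫ ω, R ω * (1 / (eR (X ω) (D ω) / (1 - eR (X ω) (D ω)))) *
              (if V ω < η then (1:ℝ) else 0) ∂P)
            - ∫ ω, R ω * (1 / (eR (X ω) (D ω) / (1 - eR (X ω) (D ω)))) *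
                mC η (X ω) (D ω) ∂P) := by
      have h23 : Integrable (fun ω =>
          R ω * (1 / (eR (X ω) (D ω) / (1 - eR (X ω) (D ω)))) *
            (if V ω < η then (1:ℝ) else 0)
          - R ω * (1 / (eR (X ω) (D ω) / (1 - eR (X ω) (D ω)))) * mC η (X ω) (D ω)) P :=
        hs2.sub hs3
      calc (∫ ω, ((1 - R ω) * (mC η (X ω) (D ω) - (1 - γ)) +
            (R ω / (eR (X ω) (D ω) / (1 - eR (X ω) (D ω)))) *
              ((if V ω < η then (1:ℝ) else 0) - mC η (X ω) (D ω))) ∂P)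
          = ∫ ω, ((1 - R ω) * (mC η (X ω) (D ω) - (1 - γ)) +
              (R ω * (1 / (eR (X ω) (D ω) / (1 - eR (X ω) (D ω)))) *
                (if V ω < η then (1:ℝ) else 0)
              - R ω * (1 / (eR (X ω) (D ω) / (1 - eR (X ω) (D ω)))) *
                  mC η (X ω) (D ω))) ∂P := by
            refine integral_congr_ae (Filter.Eventually.of_forall fun ω => ?_)
            beta_reduce; ring
        _ = (∫ ω, (1 - R ω) * (mC η (X ω) (D ω) - (1 - γ)) ∂P)
            + ∫ ω, (R ω * (1 / (eR (X ω) (D ω) / (1 - eR (X ω) (D ω)))) *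
                (if V ω < η then (1:ℝ) else 0)
              - R ω * (1 / (eR (X ω) (D ω) / (1 - eR (X ω) (D ω)))) *
                  mC η (X ω) (D ω)) ∂P := integral_add hs1 h23
        _ = (∫ ω, (1 - R ω) * (mC η (X ω) (D ω) - (1 - γ)) ∂P)
            + ((∫ ω, R ω * (1 / (eR (X ω) (D ω) / (1 - eR (X ω) (D ω)))) *
                (if V ω < η then (1:ℝ) else 0) ∂P)
              - ∫ ω, R ω * (1 / (eR (X ω) (D ω) / (1 - eR (X ω) (D ω)))) *
                  mC η (X ω) (D ω) ∂P) := by rw [integral_sub hs2 hs3]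
    rw [hB0, kV2, sub_self, add_zero]
  have E1 : (∫ ω, (1 - R ω) * (mhat η (X ω) (D ω) - (1 - γ)) ∂P)
      - (∫ ω, (1 - R ω) * (mC η (X ω) (D ω) - (1 - γ)) ∂P)
      = (∫ ω, (mhat η (X ω) (D ω) - mC η (X ω) (D ω)) ∂P)
        - ∫ ω, R ω * (mhat η (X ω) (D ω) - mC η (X ω) (D ω)) ∂P := by
    rw [← integral_sub ht1 hs1, ← integral_sub hw2int hRw2int]
    refine integral_congr_ae (Filter.Eventually.of_forall fun ω => ?_)
    beta_reduce; ring
  have E2 : (∫ ω, R ω * (1 / πhat (X ω) (D ω)) * mC η (X ω) (D ω) ∂P)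
      - (∫ ω, R ω * (1 / πhat (X ω) (D ω)) * mhat η (X ω) (D ω) ∂P)
      = ∫ ω, R ω * ((1 / πhat (X ω) (D ω)) *
          (mC η (X ω) (D ω) - mhat η (X ω) (D ω))) ∂P := by
    rw [← integral_sub htm ht3]
    refine integral_congr_ae (Filter.Eventually.of_forall fun ω => ?_)
    beta_reduce; ring
  have hfinal : (∫ ω, ((1 - R ω) * (mhat η (X ω) (D ω) - (1 - γ)) +
        (R ω / πhat (X ω) (D ω)) *
          ((if V ω < η then (1:ℝ) else 0) - mhat η (X ω) (D ω))) ∂P)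
      - (∫ ω, ((1 - R ω) * (mC η (X ω) (D ω) - (1 - γ)) +
        (R ω / (eR (X ω) (D ω) / (1 - eR (X ω) (D ω)))) *
          ((if V ω < η then (1:ℝ) else 0) - mC η (X ω) (D ω))) ∂P)
      = ∫ ω, ((mhat η (X ω) (D ω) - mC η (X ω) (D ω))
          - eR (X ω) (D ω) * (mhat η (X ω) (D ω) - mC η (X ω) (D ω))
          + eR (X ω) (D ω) * ((1 / πhat (X ω) (D ω)) *
              (mC η (X ω) (D ω) - mhat η (X ω) (D ω)))) ∂P := by
    have h23 : Integrable (fun ω => (mhat η (X ω) (D ω) - mC η (X ω) (D ω))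
        - eR (X ω) (D ω) * (mhat η (X ω) (D ω) - mC η (X ω) (D ω))) P := hw2int.sub hew2int
    have hsum : ∫ ω, ((mhat η (X ω) (D ω) - mC η (X ω) (D ω))
          - eR (X ω) (D ω) * (mhat η (X ω) (D ω) - mC η (X ω) (D ω))
          + eR (X ω) (D ω) * ((1 / πhat (X ω) (D ω)) *
              (mC η (X ω) (D ω) - mhat η (X ω) (D ω)))) ∂P
        = (∫ ω, ((mhat η (X ω) (D ω) - mC η (X ω) (D ω))
            - eR (X ω) (D ω) * (mhat η (X ω) (D ω) - mC η (X ω) (D ω))) ∂P)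
          + ∫ ω, eR (X ω) (D ω) * ((1 / πhat (X ω) (D ω)) *
              (mC η (X ω) (D ω) - mhat η (X ω) (D ω))) ∂P := integral_add h23 hew1int
    have hsub2 : ∫ ω, ((mhat η (X ω) (D ω) - mC η (X ω) (D ω))
          - eR (X ω) (D ω) * (mhat η (X ω) (D ω) - mC η (X ω) (D ω))) ∂P
        = (∫ ω, (mhat η (X ω) (D ω) - mC η (X ω) (D ω)) ∂P)
          - ∫ ω, eR (X ω) (D ω) * (mhat η (X ω) (D ω) - mC η (X ω) (D ω)) ∂P :=
      integral_sub hw2int hew2int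
    rw [hA, kV1, hB, hsum, hsub2, ← k1, ← k2]
    linarith [E1, E2]
  have hfinal2 : ∫ ω, ((mhat η (X ω) (D ω) - mC η (X ω) (D ω))
          - eR (X ω) (D ω) * (mhat η (X ω) (D ω) - mC η (X ω) (D ω))
          + eR (X ω) (D ω) * ((1 / πhat (X ω) (D ω)) *
              (mC η (X ω) (D ω) - mhat η (X ω) (D ω)))) ∂P
      = ∫ ω, (eR (X ω) (D ω) * (1 / πhat (X ω) (D ω) -
          1 / (eR (X ω) (D ω) / (1 - eR (X ω) (D ω)))))
          * (mC η (X ω) (D ω) - mhat η (X ω) (D ω)) ∂P := by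
    refine integral_congr_ae (heRbdd.mono fun ω hω => ?_)
    have he0 : eR (X ω) (D ω) ≠ 0 := ne_of_gt hω.1
    beta_reduce
    rw [one_div_div]
    field_simp
    ring
  -- the L² side
  have hπRmeas : Measurable fun ω => 1 / (eR (X ω) (D ω) / (1 - eR (X ω) (D ω))) :=
    measurable_const.div ((heRmeas.comp hφ).div (measurable_const.sub (heRmeas.comp hφ)))
  have hefb : ∀ᵐ ω ∂P, ‖eR (X ω) (D ω) * (1 / πhat (X ω) (D ω) -
      1 / (eR (X ω) (D ω) / (1 - eR (X ω) (D ω))))‖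
      ≤ ‖1 / πhat (X ω) (D ω) - 1 / (eR (X ω) (D ω) / (1 - eR (X ω) (D ω)))‖ :=
    heb.mono fun ω hω => by
      rw [norm_mul]
      exact mul_le_of_le_one_left (norm_nonneg _) hω
  have hef : MemLp (fun ω => eR (X ω) (D ω) * (1 / πhat (X ω) (D ω) -
      1 / (eR (X ω) (D ω) / (1 - eR (X ω) (D ω))))) 2 P :=
    ⟨(hemeas.mul (hhinvmeas.sub hπRmeas)).aestronglyMeasurable,
      lt_of_le_of_lt (eLpNorm_mono_ae hefb) hL2a.2⟩
  have hnorm_le : (eLpNorm (fun ω => eR (X ω) (D ω) * (1 / πhat (X ω) (D ω) -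
      1 / (eR (X ω) (D ω) / (1 - eR (X ω) (D ω))))) 2 P).toReal
      ≤ (eLpNorm (fun ω => 1 / πhat (X ω) (D ω) -
          1 / (eR (X ω) (D ω) / (1 - eR (X ω) (D ω)))) 2 P).toReal :=
    ENNReal.toReal_mono hL2a.2.ne (eLpNorm_mono_ae hefb)
  calc |(∫ ω, ((1 - R ω) * (mhat η (X ω) (D ω) - (1 - γ)) +
        (R ω / πhat (X ω) (D ω)) *
          ((if V ω < η then (1:ℝ) else 0) - mhat η (X ω) (D ω))) ∂P)
      - (∫ ω, ((1 - R ω) * (mC η (X ω) (D ω) - (1 - γ)) +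
        (R ω / (eR (X ω) (D ω) / (1 - eR (X ω) (D ω)))) *
          ((if V ω < η then (1:ℝ) else 0) - mC η (X ω) (D ω))) ∂P)|
      = |∫ ω, (eR (X ω) (D ω) * (1 / πhat (X ω) (D ω) -
          1 / (eR (X ω) (D ω) / (1 - eR (X ω) (D ω)))))
          * (mC η (X ω) (D ω) - mhat η (X ω) (D ω)) ∂P| := by rw [hfinal, hfinal2]
    _ ≤ (eLpNorm (fun ω => eR (X ω) (D ω) * (1 / πhat (X ω) (D ω) -
          1 / (eR (X ω) (D ω) / (1 - eR (X ω) (D ω))))) 2 P).toReal *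
        (eLpNorm (fun ω => mC η (X ω) (D ω) - mhat η (X ω) (D ω)) 2 P).toReal :=
        cs_aux hef (hL2b η)
    _ ≤ (eLpNorm (fun ω => 1 / πhat (X ω) (D ω) -
          1 / (eR (X ω) (D ω) / (1 - eR (X ω) (D ω)))) 2 P).toReal *
        (eLpNorm (fun ω => mC η (X ω) (D ω) - mhat η (X ω) (D ω)) 2 P).toReal :=
        mul_le_mul_of_nonneg_right hnorm_le ENNReal.toReal_nonneg
    _ ≤ (eLpNorm (fun ω => 1 / πhat (X ω) (D ω) -
          1 / (eR (X ω) (D ω) / (1 - eR (X ω) (D ω)))) 2 P).toReal *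
        ⨆ η' : ℝ, (eLpNorm (fun ω => mC η' (X ω) (D ω) - mhat η' (X ω) (D ω)) 2 P).toReal :=
        mul_le_mul_of_nonneg_left (le_ciSup hBdd η) ENNReal.toReal_nonneg
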